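/- The class of languages accepted by quasi-deterministic stateless (qDN) sensing 5'→3' WK automata and the class REG of regular languages are incomparable under set-theoretic inclusion: the non-regular language { aⁿbⁿ : n ≥ 0 } is accepted by a stateless sensing 5'→3' WK automaton (with single transition {q} = δ(q,a,b)), while the regular language b*ab* + b* is accepted by no stateless sensing 5'→3' WK automaton. -/

import Mathlib

open Computability

/-- The two-letter alphabet `{a, b}`. -/
inductive Letter : Type
  | a : Letter
  | b : Letter
deriving DecidableEq

instance : Fintype Letter :=
  ⟨{Letter.a, Letter.b}, fun x => by cases x <;> simp⟩

open Letter

/-- A sensing 5'→3' Watson-Crick automaton over the alphabet `T` with state set `Q`: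
an initial state `q0`, a set `F` of final states, and a transition mapping
`δ : Q × T* × T* → 2^Q` that is nonempty for only finitely many triples. -/
structure WKAutomaton (T : Type) (Q : Type) where
  q0 : Q
  F : Set Q
  δ : Q → List T → List T → Set Q
  finite_delta : {t : Q × List T × List T | (δ t.1 t.2.1 t.2.2).Nonempty}.Finite

namespace WKAutomaton

variable {T Q : Type}

/-- One computation step on configurations:
`(q, x ++ w' ++ y) ⇒ (q', w')` iff `q' ∈ δ q x y`. -/
def Step (A : WKAutomaton T Q) (c c' : Q × List T) : Prop :=
  ∃ x y : List T, c.2 = x ++ c'.2 ++ y ∧ c'.1 ∈ A.δ c.1 x y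

/-- The accepted language: words `w` with `(q₀, w) ⇒* (q_F, λ)` for some final `q_F`. -/
def Lang (A : WKAutomaton T Q) : Set (List T) :=
  {w | ∃ qf ∈ A.F, Relation.ReflTransGen A.Step (A.q0, w) (qf, [])}

/-- `A` is deterministic: in every configuration at most one computation step
(choice of `x`, `y`, `w'`, `q'`) is applicable. -/
def Deterministic (A : WKAutomaton T Q) : Prop :=
  ∀ (q : Q) (w x₁ y₁ w₁ x₂ y₂ w₂ : List T) (q₁ q₂ : Q),
    w = x₁ ++ w₁ ++ y₁ → q₁ ∈ A.δ q x₁ y₁ →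
    w = x₂ ++ w₂ ++ y₂ → q₂ ∈ A.δ q x₂ y₂ →
    x₁ = x₂ ∧ y₁ = y₂ ∧ w₁ = w₂ ∧ q₁ = q₂

/-- `A` is quasi-deterministic: for every configuration `(q,w)`, whenever
`(q,w) ⇒ (p,u)` and `(q,w) ⇒ (r,v)`, it holds that `p = r`. -/
def QuasiDet (A : WKAutomaton T Q) : Prop :=
  ∀ (q : Q) (w : List T) (p r : Q) (u v : List T),
    A.Step (q, w) (p, u) → A.Step (q, w) (r, v) → p = r

/-- `A` is state-deterministic: for every state `q` there is at most one state `p`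
with `p ∈ δ(q,u,v)` for some words `u`, `v`. -/
def StateDet (A : WKAutomaton T Q) : Prop :=
  ∀ (q p₁ p₂ : Q) (u₁ v₁ u₂ v₂ : List T),
    p₁ ∈ A.δ q u₁ v₁ → p₂ ∈ A.δ q u₂ v₂ → p₁ = p₂

/-- `A` is stateless: `Q = F = {q₀}`. -/
def Stateless (A : WKAutomaton T Q) : Prop :=
  (∀ q : Q, q = A.q0) ∧ A.F = {A.q0}

/-- `A` is all-final: `Q = F`. -/
def AllFinal (A : WKAutomaton T Q) : Prop := A.F = Set.univ

/-- `A` is simple: at most one head reads in each step. -/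
def Simple (A : WKAutomaton T Q) : Prop :=
  ∀ (q : Q) (u v : List T), (A.δ q u v).Nonempty → u = [] ∨ v = []

/-- `A` is 1-limited: exactly one letter is read in each step. -/
def OneLimited (A : WKAutomaton T Q) : Prop :=
  ∀ (q : Q) (u v : List T), (A.δ q u v).Nonempty →
    (u = [] ∧ v.length = 1) ∨ (u.length = 1 ∧ v = [])

end WKAutomaton

/-- Equality of languages modulo the empty word. -/
def EqModLambda {T : Type} (L₁ L₂ : Set (List T)) : Prop :=
  ∀ w : List T, w ≠ [] → (w ∈ L₁ ↔ w ∈ L₂)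

/-- `L` is accepted (modulo the empty word) by some sensing 5'→3' WK automaton
with a finite state set satisfying the property `P`. -/
def AcceptsWith (T : Type) (P : ∀ Q : Type, WKAutomaton T Q → Prop)
    (L : Set (List T)) : Prop :=
  ∃ (Q : Type) (_ : Finite Q) (A : WKAutomaton T Q), P Q A ∧ EqModLambda A.Lang L

/-- The language `{ aⁿbⁿ : n ≥ 0 }`. -/
def Lanbn : Set (List Letter) :=
  {w | ∃ n : ℕ, w = List.replicate n a ++ List.replicate n b}

/-- The language `b*ab* + b*`. -/
def Lbabb : Set (List Letter) :=
  {w | (∃ i j : ℕ, w = List.replicate i b ++ a :: List.replicate j b) ∨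
       (∃ i : ℕ, w = List.replicate i b)}

/-! ### Auxiliary material -/

lemma rep_decomp (n : ℕ) :
    List.replicate (n + 1) a ++ List.replicate (n + 1) b
      = [a] ++ (List.replicate n a ++ List.replicate n b) ++ [b] := by
  rw [List.replicate_succ (n := n) (a := a), List.replicate_succ' (n := n) (a := b)]
  simp

/-- The stateless automaton accepting `{aⁿbⁿ}` with single transition `δ(q,a,b) = {q}`. -/
def Aanbn : WKAutomaton Letter Unit where
  q0 := ()
  F := {()}
  δ := fun _ x y => if x = [a] ∧ y = [b] then {()} else ∅
  finite_delta := by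
    apply Set.Finite.subset (Set.finite_singleton (((), [a], [b]) : Unit × List Letter × List Letter))
    rintro ⟨q, x, y⟩ h
    simp only [Set.mem_setOf_eq] at h
    by_cases hx : x = [a] ∧ y = [b]
    · simp [hx.1, hx.2]
    · simp only [if_neg hx] at h
      exact absurd h (by simp)

lemma Aanbn_reach {c : Unit × List Letter}
    (h : Relation.ReflTransGen Aanbn.Step c ((), [])) : c.2 ∈ Lanbn := by
  induction h using Relation.ReflTransGen.head_induction_on with
  | refl => exact ⟨0, rfl⟩
  | head h' hrest ih =>
    obtain ⟨x, y, heq, hmem⟩ := h'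
    by_cases hc : x = [a] ∧ y = [b]
    · obtain ⟨n, hn⟩ := ih
      refine ⟨n + 1, ?_⟩
      rw [heq, hc.1, hc.2, hn, rep_decomp]
    · simp only [Aanbn, if_neg hc] at hmem
      exact absurd hmem (by simp)

lemma Aanbn_lang : Aanbn.Lang = Lanbn := by
  ext w
  constructor
  · rintro ⟨⟨⟩, -, h⟩
    exact Aanbn_reach h
  · rintro ⟨n, rfl⟩
    refine ⟨(), rfl, ?_⟩
    induction n with
    | zero => simpa using Relation.ReflTransGen.refl
    | succ n ih =>
      refine Relation.ReflTransGen.head ⟨[a], [b], ?_, ?_⟩ ih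
      · exact rep_decomp n
      · simp [Aanbn]

lemma anbn_count {w : List Letter} (hw : w ∈ Lanbn) : w.count a = w.count b := by
  obtain ⟨n, rfl⟩ := hw
  simp [List.count_append, List.count_replicate]

lemma anbn_not_regular : ¬ Language.IsRegular (Lanbn : Language Letter) := by
  rintro ⟨σ, fσ, M, hM⟩
  set N := Fintype.card σ with hN
  have hx : List.replicate N a ++ List.replicate N b ∈ M.accepts := by
    rw [hM]; exact ⟨N, rfl⟩
  have hlen : N ≤ (List.replicate N a ++ List.replicate N b).length := by simp
  obtain ⟨u, v, z, hsplit, hle, hne, hpump⟩ := M.pumping_lemma hx hlen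
  -- `u ++ v` is a prefix of `replicate N a`, so `v` consists of `a`'s
  have hpre : (u ++ v) <+: List.replicate N a := by
    refine List.prefix_of_prefix_length_le ⟨z, hsplit.symm⟩
      (List.prefix_append _ _) (by simpa using hle)
  have hva : ∀ x ∈ v, x = a := fun x hxv =>
    List.eq_of_mem_replicate (hpre.subset (List.mem_append_right u hxv))
  -- the pumped word
  have hpmem : u ++ (v ++ v) ++ z ∈ M.accepts := by
    apply hpump
    refine ⟨u ++ (v ++ v), ?_, z, rfl, rfl⟩
    refine ⟨u, rfl, v ++ v, ?_, rfl⟩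
    apply Language.mem_kstar.2
    refine ⟨[v, v], by simp, ?_⟩
    intro y hy
    simp only [List.mem_cons, List.not_mem_nil, or_false] at hy
    rcases hy with rfl | rfl <;> rfl
  rw [hM] at hpmem
  have hcount := anbn_count hpmem
  have hcount' := anbn_count (show (List.replicate N a ++ List.replicate N b : List Letter) ∈ Lanbn from ⟨N, rfl⟩)
  rw [hsplit] at hcount'
  have hva' : v.count a = v.length := List.count_eq_length.2 (fun x hx => ((hva x hx).symm ▸ rfl))
  have hvb : v.count b = 0 := List.count_eq_zero.2 (fun hb => by
    have := hva b hb; exact absurd this (by decide))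
  simp only [List.count_append] at hcount hcount'
  have : v.length = 0 := by omega
  exact hne (List.length_eq_zero_iff.1 this)

/-- The DFA for `b*ab* + b*` (words with at most one `a`). -/
def Mbab : DFA Letter (Fin 3) where
  step := fun s c => match c with
    | Letter.a => ⟨min 2 (s.val + 1), by omega⟩
    | Letter.b => s
  start := 0
  accept := {s | s.val ≤ 1}

lemma Mbab_evalFrom (w : List Letter) : ∀ s : Fin 3,
    (Mbab.evalFrom s w).val = min 2 (s.val + w.count a) := by
  induction w with
  | nil => intro s; have := s.isLt; simp [DFA.evalFrom]; omega
  | cons c t ih =>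
    intro s
    have hstep : Mbab.evalFrom s (c :: t) = Mbab.evalFrom (Mbab.step s c) t := rfl
    rw [hstep, ih]
    have := s.isLt
    cases c with
    | a =>
      have hstepval : (Mbab.step s a).val = min 2 (s.val + 1) := rfl
      rw [hstepval, List.count_cons]
      simp only [show (a == a) = true from rfl, if_true]
      omega
    | b =>
      have hstepval : Mbab.step s b = s := rfl
      rw [hstepval, List.count_cons]
      simp only [show (b == a) = false from rfl, Bool.false_eq_true, if_false]
      omega

lemma Lbabb_iff (w : List Letter) : w ∈ Lbabb ↔ w.count a ≤ 1 := by
  constructor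
  · rintro (⟨i, j, rfl⟩ | ⟨i, rfl⟩) <;>
      simp [List.count_append, List.count_replicate, List.count_cons]
  · intro h
    induction w with
    | nil => exact Or.inr ⟨0, rfl⟩
    | cons c t ih =>
      cases c with
      | a =>
        have ht : t.count a = 0 := by
          simp [List.count_cons] at h; omega
        have htb : ∀ x ∈ t, x = b := by
          intro x hx
          cases x with
          | a => exact absurd hx (List.count_eq_zero.1 ht)
          | b => rfl
        refine Or.inl ⟨0, t.length, ?_⟩
        rw [List.replicate_zero, List.nil_append]
        exact congrArg (List.cons a) (List.eq_replicate_length.2 htb)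
      | b =>
        have h' : t.count a ≤ 1 := by
          simpa [List.count_cons] using h
        rcases ih h' with ⟨i, j, hw⟩ | ⟨i, hw⟩
        · exact Or.inl ⟨i + 1, j, by rw [List.replicate_succ]; simp [hw]⟩
        · exact Or.inr ⟨i + 1, by rw [List.replicate_succ]; simp [hw]⟩

lemma babb_regular : Language.IsRegular (Lbabb : Language Letter) := by
  refine ⟨Fin 3, inferInstance, Mbab, ?_⟩
  ext w
  rw [DFA.mem_accepts]
  show Mbab.evalFrom Mbab.start w ∈ Mbab.accept ↔ w ∈ Lbabb
  have := Mbab_evalFrom w Mbab.start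
  constructor
  · intro hmem
    rw [Lbabb_iff]
    have hmem' : (Mbab.evalFrom Mbab.start w).val ≤ 1 := hmem
    rw [this] at hmem'
    simp [Mbab] at hmem' ⊢
    omega
  · intro hmem
    rw [Lbabb_iff] at hmem
    show (Mbab.evalFrom Mbab.start w).val ≤ 1
    rw [this]
    simp [Mbab]
    omega

lemma consume_singleton {Q : Type} (A : WKAutomaton Letter Q) (hs : ∀ q : Q, q = A.q0) :
    ∀ c : Q × List Letter, ∀ q' : Q,
      Relation.ReflTransGen A.Step c (q', []) → c.2 = [a] →
      ∃ x y : List Letter, x ++ y = [a] ∧ (A.δ A.q0 x y).Nonempty := by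
  intro c q' h
  induction h using Relation.ReflTransGen.head_induction_on with
  | refl => intro hc; exact absurd hc (by simp)
  | @head cs cm h' hrest ih =>
    intro hc
    obtain ⟨x, y, heq, hmem⟩ := h'
    rw [hc] at heq
    obtain ⟨qm, wm⟩ := cm
    rcases wm with _ | ⟨d, t⟩
    · -- consuming step: x ++ y = [a]
      refine ⟨x, y, by simpa using heq.symm, ?_⟩
      rw [hs cs.1] at hmem
      exact ⟨qm, hmem⟩
    · -- non-consuming step: x = [], y = [], t = []
      have hlen : x.length + (t.length + y.length + 1) = 1 := by
        have h2 := congrArg List.length heq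
        simpa using h2.symm
      have hx : x = [] := List.eq_nil_of_length_eq_zero (by omega)
      have hy : y = [] := List.eq_nil_of_length_eq_zero (by omega)
      have ht : t = [] := List.eq_nil_of_length_eq_zero (by omega)
      subst hx; subst hy; subst ht
      simp only [List.nil_append, List.append_nil] at heq
      exact ih heq.symm

lemma babb_not_stateless :
    ¬ AcceptsWith Letter (fun _ A => A.Stateless) Lbabb := by
  rintro ⟨Q, _, A, ⟨hall, hF⟩, heq⟩
  -- [a] ∈ Lbabb, hence [a] ∈ A.Lang
  have ha : [a] ∈ A.Lang := by
    rw [heq [a] (by simp)]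
    exact Or.inl ⟨0, 0, rfl⟩
  obtain ⟨qf, hqf, hrtg⟩ := ha
  obtain ⟨x, y, hxy, p, hp⟩ := consume_singleton A hall (A.q0, [a]) qf hrtg rfl
  have hp' : A.q0 ∈ A.δ A.q0 x y := (hall p) ▸ hp
  -- build an accepting computation for [a, a]
  have haa : [a, a] ∈ A.Lang := by
    refine ⟨A.q0, by rw [hF]; rfl, ?_⟩
    rcases x with _ | ⟨d, x'⟩
    · -- x = [], y = [a]
      simp only [List.nil_append] at hxy
      subst hxy
      have s1 : A.Step (A.q0, [a, a]) (A.q0, [a]) := ⟨[], [a], rfl, hp'⟩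
      have s2 : A.Step (A.q0, [a]) (A.q0, []) := ⟨[], [a], rfl, hp'⟩
      exact Relation.ReflTransGen.head s1 (Relation.ReflTransGen.single s2)
    · -- x = [a], y = []
      have hd : d = a ∧ x' = [] ∧ y = [] := by
        cases x' <;> cases y <;> simp_all
      obtain ⟨rfl, rfl, rfl⟩ := hd
      have s1 : A.Step (A.q0, [a, a]) (A.q0, [a]) := ⟨[a], [], rfl, hp'⟩
      have s2 : A.Step (A.q0, [a]) (A.q0, []) := ⟨[a], [], rfl, hp'⟩
      exact Relation.ReflTransGen.head s1 (Relation.ReflTransGen.single s2)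
  rw [heq [a, a] (by simp)] at haa
  have := (Lbabb_iff [a, a]).1 haa
  simp [List.count_cons] at this

/-- The class of languages accepted by quasi-deterministic stateless (qDN) sensing
5'→3' WK automata and the class REG of regular languages are incomparable:
the non-regular language `{ aⁿbⁿ }` is accepted by a stateless sensing 5'→3'
WK automaton, while the regular language `b*ab* + b*` is accepted by no
stateless sensing 5'→3' WK automaton. -/
theorem qDN_incomparable_REG :
    AcceptsWith Letter (fun _ A => A.Stateless) Lanbn ∧
    ¬ Language.IsRegular (Lanbn : Language Letter) ∧
    Language.IsRegular (Lbabb : Language Letter) ∧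
    ¬ AcceptsWith Letter (fun _ A => A.Stateless) Lbabb := by
  refine ⟨?_, anbn_not_regular, babb_regular, babb_not_stateless⟩
  exact ⟨Unit, inferInstance, Aanbn, ⟨fun q => rfl, rfl⟩, fun w _ => by rw [Aanbn_lang]⟩
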